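/- Let g_k be the k-point Gauss quadrature of the standard normal distribution N(0,1), i.e., the unique k-atomic distribution matching the first 2k−1 moments of N(0,1). Then E_{g_k}[H_j] = 0 for j = 1, …, 2k−1, and E_{g_k}[H_{2k}] = −k!, where H_j is the probabilists' Hermite polynomial of degree j. -/

import Mathlib

open scoped ENNReal NNReal
open MeasureTheory ProbabilityTheory Polynomial Real Filter Nat

namespace Stmt14Aux

noncomputable def N : Measure ℝ := gaussianReal 0 1

instance : IsProbabilityMeasure N := by unfold N; infer_instance

noncomputable def Hr (n : ℕ) : ℝ[X] := (hermite n).map (Int.castRingHom ℝ)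

lemma bound (n : ℕ) (x : ℝ) :
    ‖x ^ n * rexp (-x ^ 2 / 2)‖ ≤ (n ! * rexp 1) * rexp (-(4⁻¹) * x ^ 2) := by
  have h1 : |x| ^ n ≤ n ! * rexp |x| := by
    have := Real.pow_div_factorial_le_exp |x| (abs_nonneg x) n
    rw [div_le_iff₀ (by positivity)] at this
    linarith [this]
  have h2 : rexp |x| * rexp (-x ^ 2 / 2) ≤ rexp 1 * rexp (-(4⁻¹) * x ^ 2) := by
    rw [← Real.exp_add, ← Real.exp_add]
    apply Real.exp_le_exp.2
    nlinarith [sq_nonneg (|x| / 2 - 1), sq_abs x]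
  calc ‖x ^ n * rexp (-x ^ 2 / 2)‖ = |x| ^ n * rexp (-x ^ 2 / 2) := by
        rw [norm_mul, Real.norm_eq_abs, Real.norm_eq_abs, abs_pow, abs_of_pos (Real.exp_pos _)]
    _ ≤ (n ! * rexp |x|) * rexp (-x ^ 2 / 2) := by
        apply mul_le_mul_of_nonneg_right h1 (Real.exp_pos _).le
    _ = n ! * (rexp |x| * rexp (-x ^ 2 / 2)) := by ring
    _ ≤ n ! * (rexp 1 * rexp (-(4⁻¹) * x ^ 2)) := by
        apply mul_le_mul_of_nonneg_left h2 (by positivity)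
    _ = (n ! * rexp 1) * rexp (-(4⁻¹) * x ^ 2) := by ring

lemma integrable_aux (n : ℕ) : Integrable (fun x : ℝ => x ^ n * rexp (-x ^ 2 / 2)) := by
  apply Integrable.mono' ((integrable_exp_neg_mul_sq (by norm_num : (0:ℝ) < 4⁻¹)).const_mul
    ((n ! : ℝ) * rexp 1))
  · exact ((measurable_id.pow_const n).mul
      ((measurable_id.pow_const 2).neg.div_const 2).exp).aestronglyMeasurable
  · exact ae_of_all _ (bound n)

lemma integrable_poly_gauss (Q : ℝ[X]) :
    Integrable (fun x : ℝ => Q.eval x * rexp (-x ^ 2 / 2)) := by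
  induction Q using Polynomial.induction_on' with
  | add p q hp hq => simp only [eval_add, add_mul]; exact hp.add hq
  | monomial n a =>
      simp only [eval_monomial]
      simpa [mul_assoc] using (integrable_aux n).const_mul a

end Stmt14Aux
namespace Stmt14Aux

lemma pdf_eq (x : ℝ) : gaussianPDFReal 0 1 x = (√(2 * π))⁻¹ * rexp (-x ^ 2 / 2) := by
  simp [gaussianPDFReal]

lemma integral_N (f : ℝ → ℝ) :
    ∫ x, f x ∂N = ∫ x, (√(2 * π))⁻¹ * (rexp (-x ^ 2 / 2) * f x) := by
  rw [N, gaussianReal_of_var_ne_zero 0 one_ne_zero]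
  have : (gaussianPDF 0 1) = fun x => ((gaussianPDFReal 0 1 x).toNNReal : ℝ≥0∞) := rfl
  rw [this, integral_withDensity_eq_integral_smul
    ((measurable_gaussianPDFReal 0 1).real_toNNReal) f]
  congr 1
  ext x
  rw [NNReal.smul_def, Real.coe_toNNReal _ (gaussianPDFReal_nonneg 0 1 x), pdf_eq,
    smul_eq_mul]
  ring

lemma integrable_N (Q : ℝ[X]) : Integrable (fun x => Q.eval x) N := by
  rw [N, gaussianReal_of_var_ne_zero 0 one_ne_zero,
    integrable_withDensity_iff (measurable_gaussianPDF 0 1)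
      (ae_of_all _ fun x => ENNReal.ofReal_lt_top)]
  have : (fun x => Q.eval x * (gaussianPDF 0 1 x).toReal)
      = fun x => (√(2 * π))⁻¹ * (Q.eval x * rexp (-x ^ 2 / 2)) := by
    ext x
    rw [gaussianPDF, ENNReal.toReal_ofReal (gaussianPDFReal_nonneg 0 1 x), pdf_eq]
    ring
  rw [this]
  exact (integrable_poly_gauss Q).const_mul _

/-- the integral of a polynomial against the standard gaussian -/
noncomputable def nInt (Q : ℝ[X]) : ℝ := ∫ x, Q.eval x ∂N

lemma nInt_sub (p q : ℝ[X]) : nInt (p - q) = nInt p - nInt q := by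
  unfold nInt
  simp only [eval_sub]
  exact integral_sub (integrable_N p) (integrable_N q)

lemma nInt_add (p q : ℝ[X]) : nInt (p + q) = nInt p + nInt q := by
  unfold nInt
  simp only [eval_add]
  exact integral_add (integrable_N p) (integrable_N q)

lemma nInt_C (a : ℝ) : nInt (C a) = a := by
  simp [nInt, integral_const]

lemma stein (Q : ℝ[X]) : nInt (X * Q) = nInt (derivative Q) := by
  have hgauss : ∀ x : ℝ, HasDerivAt (fun y : ℝ => rexp (-y ^ 2 / 2))
      (rexp (-x ^ 2 / 2) * -x) x := by
    intro x
    have h1 : HasDerivAt (fun y : ℝ => -y ^ 2 / 2) (-x) x := by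
      have := ((hasDerivAt_pow 2 x).neg.div_const 2)
      refine this.congr_deriv ?_
      simp
      ring
    exact h1.exp
  have key : (∫ x, (derivative Q - X * Q).eval x * rexp (-x ^ 2 / 2)) = 0 := by
    apply integral_eq_zero_of_hasDerivAt_of_integrable
      (f := fun x => Q.eval x * rexp (-x ^ 2 / 2))
      (fun x => ?_) (integrable_poly_gauss _) (integrable_poly_gauss Q)
    have := (Q.hasDerivAt x).mul (hgauss x)
    refine this.congr_deriv ?_
    simp only [eval_sub, eval_mul, eval_X]
    ring
  have key2 : nInt (derivative Q - X * Q) = 0 := by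
    unfold nInt
    rw [integral_N, integral_const_mul]
    simp_rw [mul_comm (rexp _)]
    rw [key, mul_zero]
  rw [nInt_sub] at key2
  linarith

end Stmt14Aux
namespace Stmt14Aux

lemma Hr_succ (n : ℕ) : Hr (n + 1) = X * Hr n - derivative (Hr n) := by
  unfold Hr
  rw [hermite_succ, Polynomial.map_sub, Polynomial.map_mul, map_X, derivative_map]

lemma natDegree_Hr (n : ℕ) : (Hr n).natDegree = n := by
  unfold Hr
  rw [natDegree_map_eq_of_injective Int.cast_injective]
  exact natDegree_hermite

lemma monic_Hr (n : ℕ) : (Hr n).Monic := (hermite_monic n).map _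

lemma nInt_hermite_mul (n : ℕ) : ∀ Q : ℝ[X], nInt (Hr n * Q) = nInt (derivative^[n] Q) := by
  induction n with
  | zero => intro Q; simp [Hr, hermite_zero]
  | succ n ih =>
      intro Q
      calc nInt (Hr (n + 1) * Q)
          = nInt (X * (Hr n * Q) - derivative (Hr n) * Q) := by rw [Hr_succ]; ring_nf
        _ = nInt (X * (Hr n * Q)) - nInt (derivative (Hr n) * Q) := nInt_sub _ _
        _ = nInt (derivative (Hr n * Q)) - nInt (derivative (Hr n) * Q) := by rw [stein]
        _ = nInt (derivative (Hr n) * Q + Hr n * derivative Q)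
              - nInt (derivative (Hr n) * Q) := by rw [derivative_mul]
        _ = nInt (Hr n * derivative Q) := by rw [nInt_add]; ring
        _ = nInt (derivative^[n] (derivative Q)) := ih _
        _ = nInt (derivative^[n + 1] Q) := by rw [Function.iterate_succ_apply]

lemma nInt_Hr_eq_zero {n : ℕ} (hn : 1 ≤ n) : nInt (Hr n) = 0 := by
  have := nInt_hermite_mul n 1
  rw [mul_one] at this
  rw [this, Polynomial.iterate_derivative_eq_zero (by simp; omega)]
  simpa using nInt_C 0

lemma iterate_derivative_Hr (k : ℕ) : derivative^[k] (Hr k) = C (k ! : ℝ) := by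
  have hdeg : (derivative^[k] (Hr k)).natDegree = 0 := by
    have := natDegree_iterate_derivative (Hr k) k
    rw [natDegree_Hr] at this
    omega
  rw [eq_C_of_natDegree_le_zero hdeg.le, coeff_iterate_derivative]
  congr 1
  rw [zero_add, Nat.descFactorial_self]
  have : (Hr k).coeff k = 1 := by
    have := (monic_Hr k).leadingCoeff
    rwa [leadingCoeff, natDegree_Hr] at this
  rw [this]
  simp

lemma nInt_Hr_sq (k : ℕ) : nInt (Hr k * Hr k) = (k ! : ℝ) := by
  rw [nInt_hermite_mul, iterate_derivative_Hr, nInt_C]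

lemma nInt_sq_eq_zero {Q : ℝ[X]} (h : nInt (Q * Q) = 0) : Q = 0 := by
  by_contra hQ
  have hne : Q * Q ≠ 0 := mul_ne_zero hQ hQ
  have h0 : (fun x => (Q * Q).eval x) =ᵐ[N] 0 := by
    refine (integral_eq_zero_iff_of_nonneg ?_ (integrable_N _)).mp h
    intro x
    simp only [Pi.zero_apply, eval_mul]
    exact mul_self_nonneg _
  have h1 : N {x | (Q * Q).eval x ≠ 0} = 0 := by
    simpa [Filter.EventuallyEq, ae_iff] using h0
  have h2 : N {x | (Q * Q).eval x = 0} = 0 := by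
    refine (gaussianReal_absolutelyContinuous 0 one_ne_zero) ?_
    exact Set.Countable.measure_zero (finite_setOf_isRoot hne).countable _
  have : (1 : ℝ≥0∞) ≤ 0 := by
    calc (1 : ℝ≥0∞) = N Set.univ := (measure_univ (μ := N)).symm
      _ ≤ N {x | (Q * Q).eval x = 0} + N {x | (Q * Q).eval x ≠ 0} := by
          refine le_trans (measure_mono ?_) (measure_union_le _ _)
          intro x _
          simp only [Set.mem_union, Set.mem_setOf_eq]
          exact em _
      _ = 0 := by rw [h1, h2, add_zero]
  simp at this

end Stmt14Aux

open Stmt14Aux in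
theorem stmt_14 (k : ℕ) (hk : 1 ≤ k) (g : Measure ℝ) [IsProbabilityMeasure g]
    (S : Finset ℝ) (hcard : S.card ≤ k) (hsupp : g ↑S = 1)
    (hm : ∀ j, 1 ≤ j → j ≤ 2 * k - 1 →
      ∫ x, x ^ j ∂g = ∫ x, x ^ j ∂(gaussianReal 0 1)) :
    (∀ j, 1 ≤ j → j ≤ 2 * k - 1 →
      ∫ x, ((Polynomial.hermite j).map (Int.castRingHom ℝ)).eval x ∂g = 0) ∧
    ∫ x, ((Polynomial.hermite (2 * k)).map (Int.castRingHom ℝ)).eval x ∂g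
      = -(k.factorial : ℝ) := by
  -- basic facts about g
  have hSm : MeasurableSet (↑S : Set ℝ) := S.finite_toSet.measurableSet
  have hSc : g (↑S)ᶜ = 0 := by
    have := measure_compl hSm (measure_ne_top g _)
    rw [hsupp, measure_univ] at this
    simpa using this
  have hae : ∀ᵐ x ∂g, x ∈ (S : Set ℝ) := by
    rw [ae_iff]
    exact hSc
  have hSne : S.Nonempty := by
    by_contra h
    rw [Finset.not_nonempty_iff_eq_empty] at h
    subst h
    simp at hsupp
  have hIg : ∀ Q : ℝ[X], Integrable (fun x => Q.eval x) g := by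
    intro Q
    refine Integrable.mono' (integrable_const (S.sup' hSne fun s => |Q.eval s|))
      (Q.continuous_aeval).aestronglyMeasurable ?_
    filter_upwards [hae] with x hx
    exact Finset.le_sup' (fun s => |Q.eval s|) hx
  have Ig_sub : ∀ p q : ℝ[X], ∫ x, (p - q).eval x ∂g = (∫ x, p.eval x ∂g) - ∫ x, q.eval x ∂g := by
    intro p q
    simp only [eval_sub]
    exact integral_sub (hIg p) (hIg q)
  have hvanish : ∀ Q : ℝ[X], (∀ s ∈ S, Q.eval s = 0) → ∫ x, Q.eval x ∂g = 0 := by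
    intro Q h
    rw [integral_congr_ae (g := fun _ => (0 : ℝ)) ?_, integral_zero]
    filter_upwards [hae] with x hx
    exact h x hx
  -- moment transfer
  have htrans : ∀ Q : ℝ[X], Q.natDegree ≤ 2 * k - 1 → ∫ x, Q.eval x ∂g = nInt Q := by
    intro Q hQ
    have h2k : Q.natDegree < 2 * k := by omega
    have hev : ∀ x : ℝ, Q.eval x = ∑ i ∈ Finset.range (2 * k), Q.coeff i * x ^ i :=
      fun x => Q.eval_eq_sum_range' h2k x
    have hig : ∀ i ∈ Finset.range (2 * k),
        Integrable (fun x : ℝ => Q.coeff i * x ^ i) g := by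
      intro i _
      have := hIg (C (Q.coeff i) * X ^ i)
      simp only [eval_mul, eval_C, eval_pow, eval_X] at this
      exact this
    have hiN : ∀ i ∈ Finset.range (2 * k),
        Integrable (fun x : ℝ => Q.coeff i * x ^ i) N := by
      intro i _
      have := integrable_N (C (Q.coeff i) * X ^ i)
      simp only [eval_mul, eval_C, eval_pow, eval_X] at this
      exact this
    simp only [hev]
    unfold nInt
    simp only [hev]
    rw [integral_finset_sum _ hig, integral_finset_sum _ hiN]
    refine Finset.sum_congr rfl fun i hi => ?_
    rw [integral_const_mul, integral_const_mul]
    congr 1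
    rcases Nat.eq_zero_or_pos i with h0 | h1
    · subst h0
      simp
    · exact hm i h1 (by simp only [Finset.mem_range] at hi; omega)
  -- the polynomial vanishing on S
  set P : ℝ[X] := ∏ s ∈ S, (X - C s) with hP
  have hPmonic : P.Monic := monic_prod_of_monic _ _ fun s _ => monic_X_sub_C s
  have hPdeg : P.natDegree = S.card := by
    rw [hP, natDegree_prod _ _ fun s _ => X_sub_C_ne_zero s]
    simp
  have hPvan : ∀ s ∈ S, P.eval s = 0 := by
    intro s hs
    rw [hP, eval_prod]
    exact Finset.prod_eq_zero hs (by simp)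
  -- S has exactly k elements
  have hcard' : S.card = k := by
    by_contra hne
    have hlt : S.card < k := lt_of_le_of_ne hcard hne
    have hdeg : (P * P).natDegree ≤ 2 * k - 1 := by
      refine le_trans natDegree_mul_le ?_
      omega
    have h1 : nInt (P * P) = 0 := by
      rw [← htrans _ hdeg]
      exact hvanish _ fun s hs => by simp [eval_mul, hPvan s hs]
    exact hPmonic.ne_zero (nInt_sq_eq_zero h1)
  have hPk : P.natDegree = k := by omega
  -- P equals the k-th Hermite polynomial
  have hPH : P = Hr k := by
    set D : ℝ[X] := P - Hr k with hD
    have hDdeg : D.natDegree < k := by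
      rcases eq_or_ne D 0 with h0 | h0
      · rw [h0, natDegree_zero]; omega
      · rw [natDegree_lt_iff_degree_lt h0]
        have hd : P.degree = (Hr k).degree := by
          rw [degree_eq_natDegree hPmonic.ne_zero, degree_eq_natDegree (monic_Hr k).ne_zero,
            hPk, natDegree_Hr]
        have := degree_sub_lt hd hPmonic.ne_zero (by rw [hPmonic.leadingCoeff,
          (monic_Hr k).leadingCoeff])
        rw [degree_eq_natDegree hPmonic.ne_zero, hPk] at this
        exact this
    have e2 : (P * D).natDegree ≤ 2 * k - 1 := by
      refine le_trans natDegree_mul_le ?_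
      omega
    have e3 : nInt (P * D) = 0 := by
      rw [← htrans _ e2]
      exact hvanish _ fun s hs => by simp [eval_mul, hPvan s hs]
    have e4 : nInt (Hr k * D) = 0 := by
      rw [nInt_hermite_mul, Polynomial.iterate_derivative_eq_zero hDdeg]
      simpa using nInt_C 0
    have e5 : nInt (D * D) = 0 := by
      have : D * D = P * D - Hr k * D := by rw [hD]; ring
      rw [this, nInt_sub, e3, e4, sub_zero]
    have : D = 0 := nInt_sq_eq_zero e5
    rw [hD, sub_eq_zero] at this
    exact this
  constructor
  · -- part 1
    intro j hj1 hj2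
    have : ∫ x, (Hr j).eval x ∂g = nInt (Hr j) := htrans _ (by rw [natDegree_Hr]; exact hj2)
    rw [show ((Polynomial.hermite j).map (Int.castRingHom ℝ)) = Hr j from rfl, this]
    exact nInt_Hr_eq_zero hj1
  · -- part 2
    set R : ℝ[X] := Hr k * Hr k - Hr (2 * k) with hR
    have hRdeg : R.natDegree ≤ 2 * k - 1 := by
      rcases eq_or_ne R 0 with h0 | h0
      · rw [h0, natDegree_zero]; omega
      · have hmul : (Hr k * Hr k).natDegree = 2 * k := by
          rw [natDegree_mul (monic_Hr k).ne_zero (monic_Hr k).ne_zero, natDegree_Hr]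
          omega
        have hmul0 : (Hr k * Hr k) ≠ 0 := mul_ne_zero (monic_Hr k).ne_zero (monic_Hr k).ne_zero
        have hd : (Hr k * Hr k).degree = (Hr (2 * k)).degree := by
          rw [degree_eq_natDegree hmul0, degree_eq_natDegree (monic_Hr (2 * k)).ne_zero,
            hmul, natDegree_Hr]
        have hlt := degree_sub_lt hd hmul0 (by rw [((monic_Hr k).mul (monic_Hr k)).leadingCoeff,
          (monic_Hr (2 * k)).leadingCoeff])
        rw [degree_eq_natDegree hmul0, hmul] at hlt
        have : R.natDegree < 2 * k := (natDegree_lt_iff_degree_lt h0).mpr hlt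
        omega
    have hA : ∫ x, (Hr k * Hr k).eval x ∂g = 0 := by
      refine hvanish _ fun s hs => ?_
      have : (Hr k).eval s = 0 := by rw [← hPH]; exact hPvan s hs
      simp [eval_mul, this]
    have hB : ∫ x, R.eval x ∂g = (k.factorial : ℝ) := by
      rw [htrans _ hRdeg, hR, nInt_sub, nInt_Hr_sq, nInt_Hr_eq_zero (by omega), sub_zero]
    have hfin : ∫ x, (Hr (2 * k)).eval x ∂g = -(k.factorial : ℝ) := by
      have hsplit : Hr (2 * k) = (Hr k * Hr k) - R := by rw [hR]; ring
      rw [hsplit, Ig_sub, hA, hB, zero_sub]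
    exact hfin
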